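/- Let f : [0,1]^d → ℝ be a non-negative, differentiable, continuous DR-submodular function. Then for every x, y ∈ [0,1]^d and every z ∈ [0,1], writing x̄ = max_j x_j for the largest coordinate of x, one has f(h_z(x) ⊕ y) ≥ e^{−z x̄} · f(y) ≥ e^{−z} · f(y). -/

import Mathlib

open scoped RealInnerProductSpace

noncomputable section

/-- Membership in the unit box `[0,1]^d`. -/
def inBox {d : ℕ} (x : EuclideanSpace ℝ (Fin d)) : Prop :=
  ∀ i, x i ∈ Set.Icc (0 : ℝ) 1

/-- Continuous DR-submodularity: the gradient is coordinate-wise antitone on `[0,1]^d`. -/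
def DRSubmodular {d : ℕ} (f : EuclideanSpace ℝ (Fin d) → ℝ) : Prop :=
  ∀ x y : EuclideanSpace ℝ (Fin d), inBox x → inBox y → (∀ i, x i ≤ y i) →
    ∀ i, gradient f y i ≤ gradient f x i

/-- The exponential reparametrization `h_z(x) = 1 - e^{-z x}` (coordinate-wise). -/
def hmap {d : ℕ} (z : ℝ) (x : EuclideanSpace ℝ (Fin d)) : EuclideanSpace ℝ (Fin d) :=
  WithLp.toLp 2 (fun i => 1 - Real.exp (-(z * x i)))

/-- Coordinate-wise probabilistic sum `x ⊕ y = 1 - (1-x) ⊙ (1-y)`. -/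
def psum {d : ℕ} (x y : EuclideanSpace ℝ (Fin d)) : EuclideanSpace ℝ (Fin d) :=
  WithLp.toLp 2 (fun i => 1 - (1 - x i) * (1 - y i))

/-- Coordinate-wise (Hadamard) product. -/
def had {d : ℕ} (u v : EuclideanSpace ℝ (Fin d)) : EuclideanSpace ℝ (Fin d) :=
  WithLp.toLp 2 (fun i => u i * v i)

/-- Coordinate-wise exponential `e^{-z x}`. -/
def expv {d : ℕ} (z : ℝ) (x : EuclideanSpace ℝ (Fin d)) : EuclideanSpace ℝ (Fin d) :=
  WithLp.toLp 2 (fun i => Real.exp (-(z * x i)))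

/-- The surrogate potential
`F(x) = ∫₀¹ (e^{z-1} / ((1-e⁻¹) z)) (f(1 - e^{-z x}) - f(0)) dz`. -/
def surrogate {d : ℕ} (f : EuclideanSpace ℝ (Fin d) → ℝ)
    (x : EuclideanSpace ℝ (Fin d)) : ℝ :=
  ∫ z in (0:ℝ)..1, (Real.exp (z - 1) / ((1 - Real.exp (-1)) * z)) * (f (hmap z x) - f 0)

/-- A set `K ⊆ [0,1]^d` is down-closed if `y ∈ K` and `0 ≤ x ≤ y` imply `x ∈ K`. -/
def DownClosed {d : ℕ} (K : Set (EuclideanSpace ℝ (Fin d))) : Prop :=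
  ∀ y ∈ K, ∀ x : EuclideanSpace ℝ (Fin d), (∀ i, 0 ≤ x i) → (∀ i, x i ≤ y i) → x ∈ K

variable {d : ℕ}

lemma hasDerivAt_comp_grad (f : EuclideanSpace ℝ (Fin d) → ℝ) (hdiff : Differentiable ℝ f)
    (γ : ℝ → EuclideanSpace ℝ (Fin d)) (v : EuclideanSpace ℝ (Fin d)) (t : ℝ)
    (hγ : HasDerivAt γ v t) :
    HasDerivAt (fun s => f (γ s)) (∑ i, gradient f (γ t) i * v i) t := by
  have h1 := (hdiff (γ t)).hasGradientAt.hasFDerivAt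
  have h2 := h1.comp_hasDerivAt t hγ
  have : (InnerProductSpace.toDual ℝ _ (gradient f (γ t))) v = ∑ i, gradient f (γ t) i * v i := by
    rw [InnerProductSpace.toDual_apply_apply]
    simp only [PiLp.inner_apply, RCLike.inner_apply, conj_trivial]
    exact Finset.sum_congr rfl fun i _ => mul_comm _ _
  rw [this] at h2
  exact h2

lemma hasDerivAt_path (γ : ℝ → EuclideanSpace ℝ (Fin d)) (v : EuclideanSpace ℝ (Fin d)) (t : ℝ)
    (h : ∀ i, HasDerivAt (fun s => γ s i) (v i) t) :
    HasDerivAt γ v t := by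
  have hp : HasDerivAt (fun s => (fun i => γ s i : Fin d → ℝ)) (fun i => v i) t := hasDerivAt_pi.2 h
  exact ((EuclideanSpace.equiv (Fin d) ℝ).symm.toContinuousLinearMap.hasFDerivAt).comp_hasDerivAt t hp

lemma mvt_seg (f : EuclideanSpace ℝ (Fin d) → ℝ) (hdiff : Differentiable ℝ f)
    (a b : EuclideanSpace ℝ (Fin d)) :
    ∃ s ∈ Set.Ioo (0:ℝ) 1,
      f b - f a = ∑ i, gradient f (a + s • (b - a)) i * (b i - a i) := by
  set γ : ℝ → EuclideanSpace ℝ (Fin d) := fun s => a + s • (b - a) with hγdef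
  have hder : ∀ s : ℝ, HasDerivAt γ (b - a) s := by
    intro s
    apply hasDerivAt_path
    intro i
    have : HasDerivAt (fun u : ℝ => a i + u * (b i - a i)) (b i - a i) s := by
      simpa using ((hasDerivAt_id s).mul_const (b i - a i)).const_add (a i)
    convert this using 1
    · funext u; simp [γ]
    · simp
  have hφ : ∀ s : ℝ, HasDerivAt (fun u => f (γ u))
      (∑ i, gradient f (γ s) i * (b - a) i) s :=
    fun s => hasDerivAt_comp_grad f hdiff γ (b - a) s (hder s)
  obtain ⟨s, hs, heq⟩ := exists_hasDerivAt_eq_slope (fun u => f (γ u))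
      (fun s => ∑ i, gradient f (γ s) i * (b - a) i) zero_lt_one
      (fun s _ => (hφ s).continuousAt.continuousWithinAt)
      (fun s _ => hφ s)
  refine ⟨s, hs, ?_⟩
  have h0 : γ 0 = a := by
    ext i; show (a + (0:ℝ) • (b - a)) i = a i; simp
  have h1 : γ 1 = b := by
    ext i
    show (a + (1:ℝ) • (b - a)) i = b i
    have : (a + (1:ℝ) • (b - a)) i = a i + 1 * (b i - a i) := by
      simp [PiLp.add_apply, PiLp.smul_apply, PiLp.sub_apply]
    rw [this]; ring
  rw [h0, h1] at heq
  rw [show f b - f a = (f b - f a) / (1 - 0) by ring, ← heq]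
  exact Finset.sum_congr rfl fun i _ => rfl

lemma negpart (f : EuclideanSpace ℝ (Fin d) → ℝ) (hdiff : Differentiable ℝ f)
    (hpos : ∀ x, inBox x → 0 ≤ f x) (hDR : DRSubmodular f)
    (c : EuclideanSpace ℝ (Fin d)) (hc : inBox c) :
    -f c ≤ ∑ i, (1 - c i) * min (gradient f c i) 0 := by
  classical
  set w : EuclideanSpace ℝ (Fin d) := WithLp.toLp 2 (fun i => if gradient f c i < 0 then 1 else c i) with hwdef
  have hwi : ∀ i, w i = if gradient f c i < 0 then 1 else c i := fun i => rfl
  have hcw : ∀ i, c i ≤ w i := by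
    intro i; rw [hwi]; split
    · exact (hc i).2
    · exact le_refl _
  have hw : inBox w := by
    intro i; rw [hwi]; split
    · exact ⟨zero_le_one, le_refl 1⟩
    · exact hc i
  obtain ⟨s, hs, heq⟩ := mvt_seg f hdiff c w
  set p := c + s • (w - c) with hpdef
  have hpi : ∀ i, p i = c i + s * (w i - c i) := by
    intro i; show (c + s • (w - c)) i = _
    simp [PiLp.add_apply, PiLp.smul_apply, PiLp.sub_apply]
  have hcp : ∀ i, c i ≤ p i := by
    intro i; rw [hpi]
    nlinarith [hcw i, hs.1.le]
  have hp : inBox p := by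
    intro i; rw [hpi]
    constructor
    · nlinarith [(hc i).1, hcw i, hs.1.le]
    · nlinarith [(hw i).2, hcw i, hs.1.le, hs.2.le, (hc i).2]
  have hgrad : ∀ i, gradient f p i ≤ gradient f c i := hDR c p hc hp hcp
  have hsum : ∑ i, gradient f p i * (w i - c i) ≤ ∑ i, (1 - c i) * min (gradient f c i) 0 := by
    apply Finset.sum_le_sum
    intro i _
    rw [hwi]
    by_cases hgi : gradient f c i < 0
    · simp only [if_pos hgi, min_eq_left hgi.le]
      nlinarith [hgrad i, (hc i).2]
    · simp only [if_neg hgi, min_eq_right (not_lt.1 hgi)]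
      simp
  have hfw : 0 ≤ f w := hpos w hw
  have : f w - f c = ∑ i, gradient f p i * (w i - c i) := heq
  linarith

/-- Lemma: lower bound under exponential reparametrization.
For a non-negative, differentiable, continuous DR-submodular `f` on `[0,1]^d`,
any `x, y ∈ [0,1]^d` and `z ∈ [0,1]`, with `x̄ = max_j x_j`,
`f(h_z(x) ⊕ y) ≥ e^{-z x̄} f(y) ≥ e^{-z} f(y)`. -/
theorem stmt0 {d : ℕ} (hd : 0 < d) (f : EuclideanSpace ℝ (Fin d) → ℝ)
    (hdiff : Differentiable ℝ f) (hpos : ∀ x, inBox x → 0 ≤ f x)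
    (hDR : DRSubmodular f)
    (x y : EuclideanSpace ℝ (Fin d)) (hx : inBox x) (hy : inBox y)
    (z : ℝ) (hz01 : z ∈ Set.Icc (0 : ℝ) 1) :
    Real.exp (-z) * f y ≤ Real.exp (-(z * (⨆ j, x j))) * f y ∧
      Real.exp (-(z * (⨆ j, x j))) * f y ≤ f (psum (hmap z x) y) := by
  classical
  haveI : Nonempty (Fin d) := ⟨⟨0, hd⟩⟩
  set X := ⨆ j, x j with hXdef
  have hXub : ∀ i, x i ≤ X := fun i =>
    le_ciSup (Set.Finite.bddAbove (Set.finite_range _)) i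
  have hX1 : X ≤ 1 := ciSup_le fun i => (hx i).2
  have hX0 : 0 ≤ X := le_trans (hx ⟨0, hd⟩).1 (hXub ⟨0, hd⟩)
  have hz0 := hz01.1
  have hz1 := hz01.2
  have hfy : 0 ≤ f y := hpos y hy
  constructor
  · apply mul_le_mul_of_nonneg_right _ hfy
    apply Real.exp_le_exp.2
    nlinarith
  -- main part
  set γ : ℝ → EuclideanSpace ℝ (Fin d) :=
    fun t => WithLp.toLp 2 (fun i => 1 - Real.exp (-(t * (z * x i))) * (1 - y i)) with hγdef
  have hγi : ∀ t i, γ t i = 1 - Real.exp (-(t * (z * x i))) * (1 - y i) := fun t i => rfl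
  set γ' : ℝ → EuclideanSpace ℝ (Fin d) :=
    fun t => WithLp.toLp 2 (fun i => (z * x i) * Real.exp (-(t * (z * x i))) * (1 - y i)) with hγ'def
  have hγ'i : ∀ t i, γ' t i = (z * x i) * Real.exp (-(t * (z * x i))) * (1 - y i) :=
    fun t i => rfl
  have hder : ∀ t : ℝ, HasDerivAt γ (γ' t) t := by
    intro t
    apply hasDerivAt_path
    intro i
    have h0 : HasDerivAt (fun s : ℝ => -(s * (z * x i))) (-(z * x i)) t := by
      simpa using ((hasDerivAt_id t).mul_const (z * x i)).fun_neg
    have h1 := (h0.exp.mul_const (1 - y i)).const_sub 1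
    refine h1.congr_deriv ?_
    rw [hγ'i]
    ring
  have hbox : ∀ t, 0 ≤ t → inBox (γ t) := by
    intro t ht i
    rw [hγi]
    have he1 : Real.exp (-(t * (z * x i))) ≤ 1 := by
      apply Real.exp_le_one_iff.2
      have : 0 ≤ t * (z * x i) := mul_nonneg ht (mul_nonneg hz0 (hx i).1)
      linarith
    have he0 : 0 ≤ Real.exp (-(t * (z * x i))) := (Real.exp_pos _).le
    have hb0 : 0 ≤ 1 - y i := by linarith [(hy i).2]
    have hb1 : 1 - y i ≤ 1 := by linarith [(hy i).1]
    constructor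
    · nlinarith
    · nlinarith
  have hG : ∀ t : ℝ, HasDerivAt (fun s => f (γ s)) (∑ i, gradient f (γ t) i * γ' t i) t :=
    fun t => hasDerivAt_comp_grad f hdiff γ (γ' t) t (hder t)
  set H : ℝ → ℝ := fun t => Real.exp (z * X * t) * f (γ t) with hHdef
  set H' : ℝ → ℝ := fun t =>
    z * X * Real.exp (z * X * t) * f (γ t)
      + Real.exp (z * X * t) * (∑ i, gradient f (γ t) i * γ' t i) with hH'def
  have hH : ∀ t : ℝ, HasDerivAt H (H' t) t := by
    intro t
    have he : HasDerivAt (fun t => Real.exp (z * X * t)) (z * X * Real.exp (z * X * t)) t := by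
      have := ((hasDerivAt_id t).const_mul (z * X)).exp
      simpa [mul_comm] using this
    exact he.mul (hG t)
  have hH'nonneg : ∀ t ∈ Set.Ioo (0:ℝ) 1, 0 ≤ H' t := by
    intro t ht
    have hbt : inBox (γ t) := hbox t ht.1.le
    have key : -f (γ t) ≤ ∑ i, (1 - γ t i) * min (gradient f (γ t) i) 0 :=
      negpart f hdiff hpos hDR (γ t) hbt
    have key2 : ∀ i, (z * X) * ((1 - γ t i) * min (gradient f (γ t) i) 0)
        ≤ gradient f (γ t) i * γ' t i := by
      intro i
      rw [hγi, hγ'i]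
      set e := Real.exp (-(t * (z * x i))) with hedef
      have he0 : 0 < e := Real.exp_pos _
      have hb0 : 0 ≤ 1 - y i := by linarith [(hy i).2]
      have hx0 : 0 ≤ x i := (hx i).1
      set g := gradient f (γ t) i with hgdef
      rcases le_or_gt 0 g with hg | hg
      · rw [min_eq_right hg, mul_zero, mul_zero]
        exact mul_nonneg hg (mul_nonneg (mul_nonneg (mul_nonneg hz0 hx0) he0.le) hb0)
      · rw [min_eq_left hg.le]
        have h1 : z * x i ≤ z * X := mul_le_mul_of_nonneg_left (hXub i) hz0
        have h2 : ((z * X - z * x i) * e * (1 - y i)) * g ≤ 0 :=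
          mul_nonpos_of_nonneg_of_nonpos
            (mul_nonneg (mul_nonneg (sub_nonneg.2 h1) he0.le) hb0) hg.le
        nlinarith [h2]
    have ksum : (z * X) * (∑ i, (1 - γ t i) * min (gradient f (γ t) i) 0)
        ≤ ∑ i, gradient f (γ t) i * γ' t i := by
      rw [Finset.mul_sum]
      exact Finset.sum_le_sum fun i _ => key2 i
    have hzX : 0 ≤ z * X := mul_nonneg hz0 hX0
    have hkey' : (z * X) * (-f (γ t)) ≤ (z * X) * (∑ i, (1 - γ t i) * min (gradient f (γ t) i) 0) :=
      mul_le_mul_of_nonneg_left key hzX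
    have hfinal : -(z * X * f (γ t)) ≤ ∑ i, gradient f (γ t) i * γ' t i := by nlinarith
    have hep : 0 < Real.exp (z * X * t) := Real.exp_pos _
    show 0 ≤ z * X * Real.exp (z * X * t) * f (γ t)
        + Real.exp (z * X * t) * (∑ i, gradient f (γ t) i * γ' t i)
    nlinarith [mul_le_mul_of_nonneg_left hfinal hep.le]
  obtain ⟨ξ, hξ, hslope⟩ := exists_hasDerivAt_eq_slope H H' zero_lt_one
    (fun s _ => (hH s).continuousAt.continuousWithinAt) (fun s _ => hH s)
  have hmono : H 0 ≤ H 1 := by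
    have h := hH'nonneg ξ hξ
    rw [hslope] at h
    norm_num at h
    linarith
  have hγ0 : γ 0 = y := by
    ext i
    rw [hγi]; simp
  have hγ1 : γ 1 = psum (hmap z x) y := by
    ext i
    rw [hγi]
    show _ = 1 - (1 - (1 - Real.exp (-(z * x i)))) * (1 - y i)
    ring_nf
  have hH0 : H 0 = f y := by rw [hHdef]; simp [hγ0]
  have hH1 : H 1 = Real.exp (z * X) * f (psum (hmap z x) y) := by
    rw [hHdef]; simp [hγ1]
  rw [hH0, hH1] at hmono
  rw [Real.exp_neg]
  exact (inv_mul_le_iff₀ (Real.exp_pos _)).2 hmono
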